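/- Let (γ_k) be any sequence of real numbers with γ_k ≥ 1 for all k and γ_k → ∞. Let s, v ∈ ℝ be such that v ∈ φ_∞(s), i.e., either (s < 1 and v = 0) or (s = 1 and v ≥ 0). Then there exists a sequence (s_k) of real numbers with s_k → s and φ_{γ_k}(s_k) = (max(s_k,0))^{γ_k+1} → v as k → ∞. (This is the 'recovery sequence' half of the convergence of the graphs φ_γ to φ_∞ as γ → ∞.) -/

import Mathlib

open Filter Topology

/-- **Recovery sequence half of the graph convergence `φ_γ → φ_∞`.**
For `γ ≥ 1`, `φ_γ(s) = (s⁺)^(γ+1)`, and `v ∈ φ_∞(s)` iff (`s < 1` and `v = 0`) or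
(`s = 1` and `v ≥ 0`).  Given a sequence `γ_k ≥ 1` with `γ_k → ∞` and `v ∈ φ_∞(s)`,
there is a sequence `s_k → s` with `φ_{γ_k}(s_k) → v`. -/
theorem stmt_0 (γ : ℕ → ℝ) (hγ1 : ∀ k, 1 ≤ γ k) (hγ : Tendsto γ atTop atTop)
    (s v : ℝ) (hv : (s < 1 ∧ v = 0) ∨ (s = 1 ∧ 0 ≤ v)) :
    ∃ sk : ℕ → ℝ, Tendsto sk atTop (𝓝 s) ∧
      Tendsto (fun k => (max (sk k) 0) ^ (γ k + 1)) atTop (𝓝 v) := by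
  have hγ2 : ∀ k, (0:ℝ) < γ k + 1 := fun k => by linarith [hγ1 k]
  have hγ' : Tendsto (fun k => γ k + 1) atTop atTop :=
    hγ.atTop_add tendsto_const_nhds
  rcases hv with ⟨hs, hv0⟩ | ⟨hs, hv0⟩
  · -- s < 1, v = 0 : constant sequence
    refine ⟨fun _ => s, tendsto_const_nhds, ?_⟩
    subst hv0
    set c := max s 0 with hc
    have hc0 : 0 ≤ c := le_max_right _ _
    have hc1 : c < 1 := max_lt hs one_pos
    rcases eq_or_lt_of_le hc0 with h0 | h0
    · have : ∀ k, c ^ (γ k + 1) = 0 := fun k =>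
        by rw [← h0, Real.zero_rpow (ne_of_gt (hγ2 k))]
      exact (tendsto_congr (fun k => (this k).symm)).mp tendsto_const_nhds
    · exact (tendsto_rpow_atTop_of_base_lt_one c (by linarith) hc1).comp hγ'
  · -- s = 1
    subst hs
    rcases eq_or_lt_of_le hv0 with h0 | h0
    · -- v = 0 : use exp(-1/√(γ+1))
      refine ⟨fun k => Real.exp (-(Real.sqrt (γ k + 1))⁻¹), ?_, ?_⟩
      · have hsq : Tendsto (fun k => Real.sqrt (γ k + 1)) atTop atTop := by
          simp only [Real.sqrt_eq_rpow]
          exact (tendsto_rpow_atTop (by norm_num : (0:ℝ) < 1/2)).comp hγ'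
        have : Tendsto (fun k => -(Real.sqrt (γ k + 1))⁻¹) atTop (𝓝 0) := by
          simpa using (hsq.inv_tendsto_atTop).neg
        simpa [Function.comp_def] using (Real.continuous_exp.continuousAt.tendsto.comp this)
      · have heq : ∀ k, (max (Real.exp (-(Real.sqrt (γ k + 1))⁻¹)) 0) ^ (γ k + 1)
            = Real.exp (-(Real.sqrt (γ k + 1))) := by
          intro k
          have hpos := Real.exp_pos (-(Real.sqrt (γ k + 1))⁻¹)
          rw [max_eq_left hpos.le, Real.rpow_def_of_pos hpos, Real.log_exp]
          congr 1
          have hsp : 0 < Real.sqrt (γ k + 1) := Real.sqrt_pos.2 (hγ2 k)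
          have : Real.sqrt (γ k + 1) * Real.sqrt (γ k + 1) = γ k + 1 :=
            Real.mul_self_sqrt (hγ2 k).le
          field_simp
          linarith [this]
        simp only [heq]
        rw [← h0]
        have hsq : Tendsto (fun k => Real.sqrt (γ k + 1)) atTop atTop := by
          simp only [Real.sqrt_eq_rpow]
          exact (tendsto_rpow_atTop (by norm_num : (0:ℝ) < 1/2)).comp hγ'
        have : Tendsto (fun k => -(Real.sqrt (γ k + 1))) atTop atBot :=
          tendsto_neg_atTop_atBot.comp hsq
        exact Real.tendsto_exp_atBot.comp this
    · -- v > 0 : use v^(1/(γ+1))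
      refine ⟨fun k => v ^ (γ k + 1)⁻¹, ?_, ?_⟩
      · have hinv : Tendsto (fun k => (γ k + 1)⁻¹) atTop (𝓝 0) :=
          hγ'.inv_tendsto_atTop
        have hcont : ContinuousAt (fun x : ℝ => v ^ x) 0 :=
          Real.continuousAt_const_rpow h0.ne'
        have := hcont.tendsto.comp hinv
        simpa [Function.comp_def] using this
      · have heq : ∀ k, (max (v ^ (γ k + 1)⁻¹) 0) ^ (γ k + 1) = v := by
          intro k
          have hpos : 0 < v ^ (γ k + 1)⁻¹ := Real.rpow_pos_of_pos h0 _
          rw [max_eq_left hpos.le, ← Real.rpow_mul h0.le,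
            inv_mul_cancel₀ (hγ2 k).ne', Real.rpow_one]
        simp only [heq]
        exact tendsto_const_nhds
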